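/- Let m ≥ 2 and l ≥ 1 be integers, let z_1 ∈ ℂ be nonzero, and let c ∈ ℂ be nonzero. Then there is no z_0 ∈ ℂ such that the polynomial identity c − z^l (z − z_1)^m = −(z − z_0)^{m+l} holds for all z ∈ ℂ. -/

import Mathlib

/-- No `z₀` satisfies the polynomial identity `c - z^l (z - z₁)^m = -(z - z₀)^{m+l}`. -/
theorem stmt11
    (m l : ℕ) (hm : 2 ≤ m) (hl : 1 ≤ l)
    (z₁ c : ℂ) (hz₁ : z₁ ≠ 0) (hc : c ≠ 0) :
    ¬ ∃ z₀ : ℂ, ∀ z : ℂ, c - z ^ l * (z - z₁) ^ m = -(z - z₀) ^ (m + l) := by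
  rintro ⟨z₀, h⟩
  -- derivative of LHS at z₁ is 0
  have h1 : HasDerivAt (fun z : ℂ => z ^ l) ((l : ℂ) * z₁ ^ (l - 1)) z₁ :=
    hasDerivAt_pow l z₁
  have h2 : HasDerivAt (fun z : ℂ => (z - z₁) ^ m)
      ((m : ℂ) * (z₁ - z₁) ^ (m - 1) * 1) z₁ :=
    HasDerivAt.fun_pow ((hasDerivAt_id z₁).sub_const z₁) m
  have hf : HasDerivAt (fun z : ℂ => c - z ^ l * (z - z₁) ^ m)
      (-((l : ℂ) * z₁ ^ (l - 1) * (z₁ - z₁) ^ m +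
        z₁ ^ l * ((m : ℂ) * (z₁ - z₁) ^ (m - 1) * 1))) z₁ :=
    (h1.mul h2).const_sub c
  have hg : HasDerivAt (fun z : ℂ => -(z - z₀) ^ (m + l))
      (-((m + l : ℕ) * (z₁ - z₀) ^ (m + l - 1) * 1)) z₁ :=
    (HasDerivAt.fun_pow ((hasDerivAt_id z₁).sub_const z₀) (m + l)).neg
  have heq : (fun z : ℂ => c - z ^ l * (z - z₁) ^ m)
      = (fun z : ℂ => -(z - z₀) ^ (m + l)) := funext h
  rw [heq] at hf
  have hd := hf.unique hg
  have hm0 : (z₁ - z₁ : ℂ) ^ m = 0 := by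
    rw [sub_self]; exact zero_pow (by omega)
  have hm1 : (z₁ - z₁ : ℂ) ^ (m - 1) = 0 := by
    rw [sub_self]; exact zero_pow (by omega)
  rw [hm0, hm1] at hd
  simp only [mul_zero, zero_mul, mul_one, add_zero, zero_add, neg_zero, neg_eq_zero] at hd
  have hml : ((m + l : ℕ) : ℂ) ≠ 0 := Nat.cast_ne_zero.mpr (by omega)
  rw [eq_comm, neg_eq_zero] at hd
  have hz : (z₁ - z₀) ^ (m + l - 1) = 0 := by
    rcases mul_eq_zero.mp hd with h' | h'
    · exact absurd h' hml
    · exact h'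
  have hz0 : z₁ - z₀ = 0 := pow_eq_zero_iff (by omega : m + l - 1 ≠ 0) |>.mp hz
  have := h z₁
  rw [sub_self, zero_pow (by omega : m ≠ 0), mul_zero, sub_zero, hz0,
    zero_pow (by omega : m + l ≠ 0), neg_zero] at this
  exact hc this
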